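/- Data processing for V_α on the A side: if X is obtained from A by a channel v(x|a) that preserves the marginal trivially, then for the classical quantity V_α with α ≥ 1, V_α(X;B) ≤ V_α(A;B) whenever p(x,b) = Σ_a p(a,b)v(x|a) and additionally the channel v is deterministic, i.e., X = f(A) for a function f: A → X. -/

import Mathlib

open Finset

lemma convexOn_abs_rpow_aux (α : ℝ) (hα : 1 ≤ α) :
    ConvexOn ℝ Set.univ (fun t : ℝ => |t| ^ α) := by
  have himg : (fun x : ℝ => |x|) '' Set.univ = Set.Ici 0 := by
    ext y
    constructor
    · rintro ⟨x, -, rfl⟩; exact abs_nonneg x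
    · intro hy; exact ⟨y, Set.mem_univ _, abs_of_nonneg hy⟩
  have hg : ConvexOn ℝ ((fun x : ℝ => |x|) '' Set.univ) (fun x : ℝ => x ^ α) := by
    rw [himg]; exact convexOn_rpow hα
  have hmono : MonotoneOn (fun x : ℝ => x ^ α) ((fun x : ℝ => |x|) '' Set.univ) := by
    rw [himg]
    intro x hx y hy hxy
    exact Real.rpow_le_rpow hx hxy (le_trans zero_le_one hα)
  exact hg.comp (convexOn_univ_norm (E := ℝ)) hmono

lemma aux_jensen {A : Type*} (α : ℝ) (hα : 1 ≤ α) (c : ℝ)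
    (g h : A → ℝ) (hg : ∀ a, 0 ≤ g a) (h0 : ∀ a, g a = 0 → h a = 0)
    (s : Finset A) :
    (∑ a ∈ s, g a) * |(∑ a ∈ s, h a) / (∑ a ∈ s, g a) - c| ^ α
      ≤ ∑ a ∈ s, g a * |h a / g a - c| ^ α := by
  set q := ∑ a ∈ s, g a with hq
  have hq0 : 0 ≤ q := sum_nonneg fun a _ => hg a
  rcases eq_or_lt_of_le hq0 with hq' | hq'
  · rw [← hq', zero_mul]
    exact sum_nonneg fun a _ => mul_nonneg (hg a) (Real.rpow_nonneg (abs_nonneg _) _)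
  · have key := (convexOn_abs_rpow_aux α hα).map_sum_le (t := s)
      (w := fun a => g a / q) (p := fun a => h a / g a - c)
      (fun a _ => div_nonneg (hg a) hq0)
      (by rw [← sum_div, ← hq, div_self hq'.ne'])
      (fun a _ => Set.mem_univ _)
    have hsum : ∑ a ∈ s, (g a / q) • (h a / g a - c) = (∑ a ∈ s, h a) / q - c := by
      have hc : ∀ a ∈ s, (g a / q) • (h a / g a - c) = (h a - c * g a) / q := by
        intro a _
        rcases eq_or_ne (g a) 0 with h' | h'
        · simp [h', h0 a h']
        · have hqne : q ≠ 0 := hq'.ne'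
          rw [smul_eq_mul]
          field_simp
      rw [sum_congr rfl hc, ← sum_div, sum_sub_distrib, ← mul_sum, ← hq, sub_div,
        mul_div_assoc, div_self hq'.ne', mul_one]
    rw [hsum] at key
    calc q * |(∑ a ∈ s, h a) / q - c| ^ α
        ≤ q * ∑ a ∈ s, (g a / q) • |h a / g a - c| ^ α :=
          mul_le_mul_of_nonneg_left key hq0
      _ = ∑ a ∈ s, g a * |h a / g a - c| ^ α := by
          rw [mul_sum]
          refine sum_congr rfl fun a _ => ?_
          rw [smul_eq_mul]
          field_simp

/-- Data processing for `V_α` on the `A` side under a deterministic map `X = f(A)`: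
with `q(x,b) = Σ_{a : f(a)=x} p(a,b)` one has `V_α(X;B) ≤ V_α(A;B)` for `α ≥ 1`. -/
theorem stmt_7 {A B X : Type*} [Fintype A] [Fintype B] [Fintype X] [DecidableEq X]
    (p : A → B → ℝ) (hp : ∀ a b, 0 ≤ p a b)
    (hsum : ∑ a, ∑ b, p a b = 1)
    (f : A → X) (α : ℝ) (hα : 1 ≤ α) :
    (∑ b, (∑ x, (∑ b', ∑ a, if f a = x then p a b' else 0) *
        |(∑ a, if f a = x then p a b else 0) /
            (∑ b', ∑ a, if f a = x then p a b' else 0) - ∑ a', p a' b| ^ α) ^ (1/α)) ≤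
      ∑ b, (∑ a, (∑ b', p a b') *
        |p a b / (∑ b', p a b') - ∑ a', p a' b| ^ α) ^ (1/α) := by
  have hα0 : 0 ≤ 1/α := by positivity
  refine sum_le_sum fun b _ => ?_
  refine Real.rpow_le_rpow ?_ ?_ hα0
  · exact sum_nonneg fun x _ => mul_nonneg
      (sum_nonneg fun b' _ => sum_nonneg fun a _ => by split <;> [exact hp a _; exact le_refl 0])
      (Real.rpow_nonneg (abs_nonneg _) _)
  -- rewrite the fiber sums as filtered sums
  have hQ : ∀ x : X, (∑ b', ∑ a, if f a = x then p a b' else 0)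
      = ∑ a ∈ univ.filter (fun a => f a = x), ∑ b', p a b' := by
    intro x
    rw [Finset.sum_comm]
    rw [sum_filter]
    refine sum_congr rfl fun a _ => ?_
    split <;> simp
  have hN : ∀ x : X, (∑ a, if f a = x then p a b else 0)
      = ∑ a ∈ univ.filter (fun a => f a = x), p a b := by
    intro x; rw [sum_filter]
  have hrhs : (∑ a, (∑ b', p a b') * |p a b / (∑ b', p a b') - ∑ a', p a' b| ^ α)
      = ∑ x, ∑ a ∈ univ.filter (fun a => f a = x),
          (∑ b', p a b') * |p a b / (∑ b', p a b') - ∑ a', p a' b| ^ α := by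
    rw [sum_fiberwise_of_maps_to (fun a _ => mem_univ (f a))]
  rw [hrhs]
  refine sum_le_sum fun x _ => ?_
  rw [hQ, hN]
  refine aux_jensen α hα _ (fun a => ∑ b', p a b') (fun a => p a b)
    (fun a => sum_nonneg fun b' _ => hp a b') (fun a ha => ?_) _
  have h1 : p a b ≤ ∑ b', p a b' := single_le_sum (fun b' _ => hp a b') (mem_univ b)
  have h2 : 0 ≤ p a b := hp a b
  have ha' : (∑ b', p a b') = 0 := ha
  linarith
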